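/- Let C be a normal closed cone with nonempty interior in a real Banach space. Let f : int C → int C be type K order-preserving and homogeneous, and let g(x) := f(x)/‖f(x)‖ for x ∈ int C. If f has an eigenvector in int C and for some x ∈ int C the orbit {g^k(x) : k ∈ ℕ} has compact closure, then g^k(x) converges to an eigenvector of f in int C. -/

import Mathlib

open Filter Topology

section Aux
variable {X : Type*} [NormedAddCommGroup X] [NormedSpace ℝ X] {C : Set X}

private lemma aux_add (hconv : Convex ℝ C)
    (hcone : ∀ x ∈ C, ∀ t : ℝ, 0 ≤ t → t • x ∈ C) :
    ∀ a ∈ C, ∀ b ∈ C, a + b ∈ C := by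
  intro a ha b hb
  have h := hconv ha hb (by norm_num : (0:ℝ) ≤ 1/2) (by norm_num : (0:ℝ) ≤ 1/2) (by norm_num)
  have h2 := hcone _ h 2 (by norm_num)
  rw [smul_add, smul_smul, smul_smul] at h2
  norm_num at h2
  exact h2

private lemma aux_smul_int (hcone : ∀ x ∈ C, ∀ t : ℝ, 0 ≤ t → t • x ∈ C)
    {t : ℝ} (ht : 0 < t) {z : X} (hz : z ∈ interior C) : t • z ∈ interior C := by
  obtain ⟨δ, hδ, hball⟩ := Metric.isOpen_iff.mp isOpen_interior z hz
  have hball' : Metric.ball z δ ⊆ C := hball.trans interior_subset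
  have hsub : Metric.ball (t • z) (t * δ) ⊆ C := by
    intro w hw
    have hmem : t⁻¹ • w ∈ Metric.ball z δ := by
      rw [Metric.mem_ball] at hw ⊢
      have he : t⁻¹ • w - z = t⁻¹ • (w - t • z) := by
        rw [smul_sub, smul_smul, inv_mul_cancel₀ ht.ne', one_smul]
      rw [dist_eq_norm, he, norm_smul, Real.norm_eq_abs, abs_of_pos (inv_pos.mpr ht)]
      rw [dist_eq_norm] at hw
      calc t⁻¹ * ‖w - t • z‖ < t⁻¹ * (t * δ) := by
            apply mul_lt_mul_of_pos_left hw (inv_pos.mpr ht)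
        _ = δ := by field_simp
    have hc := hcone _ (hball' hmem) t ht.le
    rwa [smul_inv_smul₀ ht.ne'] at hc
  exact mem_interior.mpr ⟨_, hsub, Metric.isOpen_ball, Metric.mem_ball_self (by positivity)⟩

private lemma aux_int_add (hconv : Convex ℝ C)
    (hcone : ∀ x ∈ C, ∀ t : ℝ, 0 ≤ t → t • x ∈ C)
    {z c : X} (hz : z ∈ interior C) (hc : c ∈ C) : z + c ∈ interior C := by
  obtain ⟨δ, hδ, hball⟩ := Metric.isOpen_iff.mp isOpen_interior z hz
  have hsub : Metric.ball (z + c) δ ⊆ C := by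
    intro w hw
    have hmem : w - c ∈ Metric.ball z δ := by
      rw [Metric.mem_ball, dist_eq_norm] at hw ⊢
      have : w - c - z = w - (z + c) := by abel
      rw [this]; exact hw
    have h1 : w - c ∈ C := interior_subset (hball hmem)
    have := aux_add hconv hcone _ h1 _ hc
    simpa using this
  exact mem_interior.mpr ⟨_, hsub, Metric.isOpen_ball, Metric.mem_ball_self hδ⟩

/-- key ball estimate: if ball z δ ⊆ C then ((2/δ)*‖ξ‖) • z + ξ ∈ C for every ξ. -/
private lemma aux_ball (hcone : ∀ x ∈ C, ∀ t : ℝ, 0 ≤ t → t • x ∈ C)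
    {z : X} {δ : ℝ} (hδ : 0 < δ) (hball : Metric.ball z δ ⊆ C) (ξ : X) :
    ((2/δ) * ‖ξ‖) • z + ξ ∈ C := by
  rcases eq_or_ne ξ 0 with h | h
  · have hz : z ∈ C := hball (Metric.mem_ball_self hδ)
    have := hcone z hz 0 le_rfl
    simpa [h] using this
  · have hn : (0:ℝ) < ‖ξ‖ := norm_pos_iff.mpr h
    have hx : z + (δ/(2*‖ξ‖)) • ξ ∈ C := by
      apply hball
      rw [Metric.mem_ball, dist_eq_norm]
      have he : z + (δ/(2*‖ξ‖)) • ξ - z = (δ/(2*‖ξ‖)) • ξ := by abel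
      rw [he, norm_smul, Real.norm_eq_abs, abs_of_pos (by positivity)]
      have : ‖ξ‖ * (δ / (2 * ‖ξ‖)) = δ/2 := by field_simp
      rw [mul_comm (δ / (2 * ‖ξ‖)) ‖ξ‖] at *
      rw [this]; linarith
    have hc := hcone _ hx ((2/δ) * ‖ξ‖) (by positivity)
    rw [smul_add, smul_smul] at hc
    have heq : (2/δ*‖ξ‖) * (δ/(2*‖ξ‖)) = 1 := by field_simp
    rwa [heq, one_smul] at hc

end Aux

set_option maxHeartbeats 2000000 in
/-- Let C be a normal closed cone with nonempty interior in a real Banach space.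
Let f : int C → int C be type K order-preserving and homogeneous, and let g(x) := f(x)/‖f(x)‖.
If f has an eigenvector in int C and for some x ∈ int C the orbit {g^k(x)} has compact closure,
then g^k(x) converges to an eigenvector of f in int C. -/
theorem normalized_iterates_converge_to_eigenvector
    {X : Type*} [NormedAddCommGroup X] [NormedSpace ℝ X] [CompleteSpace X]
    (C : Set X) (hC_closed : IsClosed C) (hC_convex : Convex ℝ C)
    (hC_cone : ∀ x ∈ C, ∀ t : ℝ, 0 ≤ t → t • x ∈ C)
    (hC_pointed : ∀ x, x ∈ C → -x ∈ C → x = 0)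
    (hC_int : (interior C).Nonempty)
    (hC_normal : ∃ κ > 0, ∀ x y : X, x ∈ C → y - x ∈ C → ‖x‖ ≤ κ * ‖y‖)
    (f : X → X)
    (hf_maps : ∀ x ∈ interior C, f x ∈ interior C)
    (hf_typeK : ∀ x ∈ interior C, ∀ y ∈ interior C, y - x ∈ C →
      ∃ ε > 0, (f y - f x) - ε • (y - x) ∈ C)
    (hf_hom : ∀ x ∈ interior C, ∀ t : ℝ, 0 < t → f (t • x) = t • f x)
    (hf_eig : ∃ u ∈ interior C, ∃ μ > 0, f u = μ • u)
    (x : X) (hx : x ∈ interior C)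
    (horbit : IsCompact (closure (Set.range fun k => (fun z => ‖f z‖⁻¹ • f z)^[k] x))) :
    ∃ v ∈ interior C, (∃ μ > 0, f v = μ • v) ∧
      Tendsto (fun k => (fun z => ‖f z‖⁻¹ • f z)^[k] x) atTop (𝓝 v) := by
  -- trivial case: 0 in the interior forces X ≃ {0}
  by_cases hX : (0:X) ∈ interior C
  · obtain ⟨δ, hδ, hball⟩ := Metric.isOpen_iff.mp isOpen_interior 0 hX
    have hball' : Metric.ball (0:X) δ ⊆ C := hball.trans interior_subset
    have hmem : ∀ z : X, (δ/(2*(‖z‖+1))) • z ∈ Metric.ball (0:X) δ := by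
      intro z
      rw [Metric.mem_ball, dist_zero_right, norm_smul, Real.norm_eq_abs,
        abs_of_pos (by positivity)]
      have h2 : ‖z‖ < ‖z‖ + 1 := by linarith
      calc δ/(2*(‖z‖+1)) * ‖z‖ < δ/(2*(‖z‖+1)) * (‖z‖+1) := by
            apply mul_lt_mul_of_pos_left h2 (by positivity)
        _ = δ/2 := by field_simp
        _ < δ := by linarith
    have hall : ∀ z : X, z = 0 := by
      intro z
      have h1 : (δ/(2*(‖z‖+1))) • z ∈ C := hball' (hmem z)
      have h2 : -((δ/(2*(‖z‖+1))) • z) ∈ C := by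
        apply hball'
        rw [Metric.mem_ball, dist_zero_right, norm_neg, ← dist_zero_right, ← Metric.mem_ball]
        exact hmem z
      have h3 := hC_pointed _ h1 h2
      have h4 : (δ/(2*(‖z‖+1))) ≠ 0 := by positivity
      exact (smul_eq_zero.mp h3).resolve_left h4
    refine ⟨x, hx, ⟨1, one_pos, by rw [hall (f x), hall x]; simp⟩, ?_⟩
    have hiter : ∀ k : ℕ, (fun z => ‖f z‖⁻¹ • f z)^[k] x = x := by
      intro k; rw [hall ((fun z => ‖f z‖⁻¹ • f z)^[k] x), hall x]
    simp only [hiter]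
    exact tendsto_const_nhds
  -- MAIN CASE
  · obtain ⟨κ, hκ, hnorm⟩ := hC_normal
    obtain ⟨u, hu_int, μ, hμ, hu_eig0⟩ := hf_eig
    have hCadd := aux_add hC_convex hC_cone
    have hne : ∀ z, z ∈ interior C → z ≠ 0 := fun z hz h => hX (h ▸ hz)
    have hu0 : u ≠ 0 := hne u hu_int
    have hun : (0:ℝ) < ‖u‖ := norm_pos_iff.mpr hu0
    have hμr : (0:ℝ) < (μ:ℝ) := by exact_mod_cast hμ
    have hu_eig : f u = (μ:ℝ) • u := by
      rw [hu_eig0, Nat.cast_smul_eq_nsmul]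
    -- monotonicity with gain 1 : f b - f a ≥ b - a for a ≤ b in int C
    have hmono1 : ∀ a ∈ interior C, ∀ b ∈ interior C, b - a ∈ C →
        (f b - f a) - (b - a) ∈ C := by
      intro a ha b hb hab
      obtain ⟨ε, hε, hd⟩ := hf_typeK a ha b hb hab
      have hd' : (f b - f a) - (ε:ℝ) • (b - a) ∈ C := by
        rwa [Nat.cast_smul_eq_nsmul]
      have h1 : ((ε:ℝ) - 1) • (b - a) ∈ C := by
        apply hC_cone _ hab
        have : (1:ℝ) ≤ (ε:ℝ) := by exact_mod_cast hε
        linarith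
      have := hCadd _ hd' _ h1
      have he : (f b - f a) - (ε:ℝ) • (b - a) + ((ε:ℝ) - 1) • (b - a)
          = (f b - f a) - (b - a) := by
        rw [sub_smul, one_smul]; abel
      rwa [he] at this
    have hmono : ∀ a ∈ interior C, ∀ b ∈ interior C, b - a ∈ C → f b - f a ∈ C := by
      intro a ha b hb hab
      have := hCadd _ (hmono1 a ha b hb hab) _ hab
      simpa using this
    -- local Lipschitz bound / continuity of f on the interior
    have hf_lip : ∀ z ∈ interior C, ∃ δ > 0, ∃ L ≥ (0:ℝ),
        ∀ w, ‖w - z‖ < δ → ‖f w - f z‖ ≤ L * ‖w - z‖ := by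
      intro z hz
      obtain ⟨δz, hδz, hballz⟩ := Metric.isOpen_iff.mp isOpen_interior z hz
      have hballz' : Metric.ball z δz ⊆ C := hballz.trans interior_subset
      set c : ℝ := 2/δz with hc
      have hcpos : 0 < c := by positivity
      refine ⟨δz/4, by positivity, c*(2*κ+1)*‖f z‖, by positivity, ?_⟩
      intro w hw
      set ξ : X := w - z with hξ
      set t : ℝ := c * ‖ξ‖ with ht
      have htnn : 0 ≤ t := by positivity
      have ht2 : t ≤ 1/2 := by
        have : c * ‖ξ‖ ≤ c * (δz/4) := by
          apply mul_le_mul_of_nonneg_left hw.le hcpos.le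
        rw [ht, hc] at *
        calc 2/δz * ‖ξ‖ ≤ 2/δz * (δz/4) := this
          _ = 1/2 := by field_simp; ring
      have hw_int : w ∈ interior C := by
        apply hballz
        rw [Metric.mem_ball, dist_eq_norm]
        calc ‖w - z‖ < δz/4 := hw
          _ < δz := by linarith
      have h1t : (0:ℝ) < 1 - t := by linarith
      have h1t' : (0:ℝ) < 1 + t := by linarith
      have hz1 : (1-t) • z ∈ interior C := aux_smul_int hC_cone h1t hz
      have hz2 : (1+t) • z ∈ interior C := aux_smul_int hC_cone h1t' hz
      have hlow : w - (1-t) • z ∈ C := by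
        have := aux_ball hC_cone hδz hballz' ξ
        have he : w - (1-t) • z = (c * ‖ξ‖) • z + ξ := by
          rw [sub_smul, one_smul, ← ht]; rw [hξ]; abel
        rwa [← he] at this
      have hup : (1+t) • z - w ∈ C := by
        have := aux_ball hC_cone hδz hballz' (-ξ)
        have he : (1+t) • z - w = (c * ‖-ξ‖) • z + (-ξ) := by
          rw [norm_neg, ← ht, add_smul, one_smul]; rw [hξ]; abel
        rwa [← he] at this
      have hm1 : f w - f ((1-t) • z) ∈ C := hmono _ hz1 _ hw_int hlow
      have hm2 : f ((1+t) • z) - f w ∈ C := hmono _ hw_int _ hz2 hup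
      rw [hf_hom z hz _ h1t] at hm1
      rw [hf_hom z hz _ h1t'] at hm2
      -- q := f w - f z + t • f z ∈ [0, 2t • f z]
      set q : X := f w - f z + t • f z with hq
      have hq1 : q ∈ C := by
        have he : q = f w - (1-t) • f z := by
          rw [hq, sub_smul, one_smul]; abel
        rw [he]; exact hm1
      have hq2 : (2*t) • f z - q ∈ C := by
        have he : (2*t) • f z - q = (1+t) • f z - f w := by
          rw [hq, add_smul, one_smul]
          have : (2*t) • f z = t • f z + t • f z := by
            rw [← add_smul]; ring_nf
          rw [this]; abel
        rw [he]; exact hm2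
      have hb := hnorm q ((2*t) • f z) hq1 hq2
      have hnq : ‖q‖ ≤ κ * (2*t*‖f z‖) := by
        rw [norm_smul, Real.norm_eq_abs, abs_of_nonneg (by positivity)] at hb
        linarith [hb]
      have htri : ‖f w - f z‖ ≤ ‖q‖ + t * ‖f z‖ := by
        have : f w - f z = q - t • f z := by rw [hq]; abel
        rw [this]
        calc ‖q - t • f z‖ ≤ ‖q‖ + ‖t • f z‖ := norm_sub_le _ _
          _ = ‖q‖ + t * ‖f z‖ := by
            rw [norm_smul, Real.norm_eq_abs, abs_of_nonneg htnn]
      calc ‖f w - f z‖ ≤ κ * (2*t*‖f z‖) + t * ‖f z‖ := by linarith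
        _ = (2*κ+1) * ‖f z‖ * t := by ring
        _ = c*(2*κ+1)*‖f z‖ * ‖ξ‖ := by rw [ht]; ring
        _ = c*(2*κ+1)*‖f z‖ * ‖w - z‖ := by rw [hξ]
    have hf_cont : ∀ z ∈ interior C, ContinuousAt f z := by
      intro z hz
      obtain ⟨δ, hδ, L, hL, hlip⟩ := hf_lip z hz
      rw [Metric.continuousAt_iff]
      intro ε hε
      refine ⟨min δ (ε/(L+1)), by positivity, ?_⟩
      intro w hw
      rw [dist_eq_norm] at hw ⊢
      have h1 : ‖w - z‖ < δ := lt_of_lt_of_le hw (min_le_left _ _)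
      have h2 : ‖w - z‖ ≤ ε/(L+1) := le_of_lt (lt_of_lt_of_le hw (min_le_right _ _))
      calc ‖f w - f z‖ ≤ L * ‖w - z‖ := hlip w h1
        _ ≤ L * (ε/(L+1)) := by apply mul_le_mul_of_nonneg_left h2 hL
        _ < ε := by
            rw [mul_div_assoc']
            rw [div_lt_iff₀ (by linarith)]
            nlinarith
    -- the rescaled map F = μ⁻¹ f, with F u = u
    set F : X → X := fun z => (μ:ℝ)⁻¹ • f z with hFdef
    have hμinv : (0:ℝ) < (μ:ℝ)⁻¹ := by positivity
    have hF_int : ∀ z ∈ interior C, F z ∈ interior C := fun z hz =>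
      aux_smul_int hC_cone hμinv (hf_maps z hz)
    have hfF : ∀ z : X, f z = (μ:ℝ) • F z := by
      intro z
      rw [hFdef]
      simp only []
      rw [smul_smul, mul_inv_cancel₀ hμr.ne', one_smul]
    have hF_hom : ∀ z ∈ interior C, ∀ t : ℝ, 0 < t → F (t • z) = t • F z := by
      intro z hz t ht
      rw [hFdef]
      simp only []
      rw [hf_hom z hz t ht, smul_comm]
    have hFu : F u = u := by
      rw [hFdef]; simp only []
      rw [hu_eig, smul_smul, inv_mul_cancel₀ hμr.ne', one_smul]
    have hFmono : ∀ a ∈ interior C, ∀ b ∈ interior C, b - a ∈ C → F b - F a ∈ C := by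
      intro a ha b hb hab
      have := hC_cone _ (hmono a ha b hb hab) _ hμinv.le
      rw [smul_sub] at this
      simp only [hFdef]
      exact this
    have hFstep : ∀ a ∈ interior C, ∀ b ∈ interior C, b - a ∈ C →
        (F b - F a) - (μ:ℝ)⁻¹ • (b - a) ∈ C := by
      intro a ha b hb hab
      have := hC_cone _ (hmono1 a ha b hb hab) _ hμinv.le
      rw [smul_sub, smul_sub] at this
      simp only [hFdef]
      exact this
    have hF_cont : ∀ z ∈ interior C, ContinuousAt F z := by
      intro z hz
      exact ((hf_cont z hz).const_smul ((μ:ℝ)⁻¹) : ContinuousAt _ z)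
    -- the unnormalized orbit
    set h : ℕ → X := fun k => F^[k] x with hhdef
    have h0 : h 0 = x := rfl
    have hsucc : ∀ k, h (k+1) = F (h k) := by
      intro k; rw [hhdef]; exact Function.iterate_succ_apply' F k x
    -- sandwich constants
    obtain ⟨δx, hδx, hballx⟩ := Metric.isOpen_iff.mp isOpen_interior x hx
    obtain ⟨δu, hδu, hballu⟩ := Metric.isOpen_iff.mp isOpen_interior u hu_int
    have hballu' : Metric.ball u δu ⊆ C := hballu.trans interior_subset
    have hx0 : x ≠ 0 := hne x hx
    have hxn : (0:ℝ) < ‖x‖ := norm_pos_iff.mpr hx0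
    set a₀ : ℝ := δx/(2*‖u‖) with ha₀
    set b₀ : ℝ := (2/δu)*‖x‖ with hb₀
    have ha₀pos : 0 < a₀ := by rw [ha₀]; positivity
    have hb₀pos : 0 < b₀ := by rw [hb₀]; positivity
    have hxa : x - a₀ • u ∈ C := by
      apply interior_subset
      apply hballx
      rw [Metric.mem_ball, dist_eq_norm]
      have he : x - a₀ • u - x = -(a₀ • u) := by abel
      rw [he, norm_neg, norm_smul, Real.norm_eq_abs, abs_of_pos ha₀pos, ha₀]
      rw [div_mul_eq_mul_div]
      rw [div_lt_iff₀ (by positivity)]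
      nlinarith
    have hxb : b₀ • u - x ∈ C := by
      have := aux_ball hC_cone hδu hballu' (-x)
      rw [norm_neg, ← hb₀] at this
      have he : b₀ • u + -x = b₀ • u - x := by abel
      rwa [he] at this
    have ha₀u_int : a₀ • u ∈ interior C := aux_smul_int hC_cone ha₀pos hu_int
    have hFa₀ : F (a₀ • u) = a₀ • u := by rw [hF_hom u hu_int _ ha₀pos, hFu]
    have hFb₀ : F (b₀ • u) = b₀ • u := by rw [hF_hom u hu_int _ hb₀pos, hFu]
    have hb₀u_int : b₀ • u ∈ interior C := aux_smul_int hC_cone hb₀pos hu_int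
    -- interior from lower sandwich bound
    have hwint : ∀ w : X, w - a₀ • u ∈ C → w ∈ interior C := by
      intro w hw
      have := aux_int_add hC_convex hC_cone ha₀u_int hw
      rwa [add_sub_cancel] at this
    -- the invariant
    have hh : ∀ k, (h k - a₀ • u ∈ C) ∧ (b₀ • u - h k ∈ C) := by
      intro k
      induction k with
      | zero => exact ⟨by rw [h0]; exact hxa, by rw [h0]; exact hxb⟩
      | succ k ih =>
        obtain ⟨hka, hkb⟩ := ih
        have hki : h k ∈ interior C := hwint _ hka
        constructor
        · have := hFmono _ ha₀u_int _ hki hka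
          rw [hFa₀, ← hsucc] at this
          exact this
        · have := hFmono _ hki _ hb₀u_int hkb
          rw [hFb₀, ← hsucc] at this
          exact this
    have hh_int : ∀ k, h k ∈ interior C := fun k => hwint _ (hh k).1
    -- norm bounds for sandwiched elements
    set c₁ : ℝ := a₀*‖u‖/κ with hc₁
    set c₂ : ℝ := κ*(b₀*‖u‖) with hc₂
    have hc₁pos : 0 < c₁ := by rw [hc₁]; positivity
    have hnw : ∀ w : X, w - a₀ • u ∈ C → b₀ • u - w ∈ C → c₁ ≤ ‖w‖ ∧ ‖w‖ ≤ c₂ := by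
      intro w hwa hwb
      have hau : a₀ • u ∈ C := hC_cone u (interior_subset hu_int) a₀ ha₀pos.le
      have hwC : w ∈ C := by
        have := hCadd _ hau _ hwa
        rwa [add_sub_cancel] at this
      constructor
      · have := hnorm (a₀ • u) w hau hwa
        rw [norm_smul, Real.norm_eq_abs, abs_of_pos ha₀pos] at this
        rw [hc₁, div_le_iff₀ hκ]
        linarith
      · have := hnorm w (b₀ • u) hwC hwb
        rw [norm_smul, Real.norm_eq_abs, abs_of_pos hb₀pos] at this
        rw [hc₂]
        linarith
    have hhn : ∀ k, c₁ ≤ ‖h k‖ ∧ ‖h k‖ ≤ c₂ := fun k => hnw _ (hh k).1 (hh k).2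
    -- relation to the normalized iterates
    set g : X → X := fun z => ‖f z‖⁻¹ • f z with hgdef
    have hyk : ∀ k, g^[k+1] x = ‖h (k+1)‖⁻¹ • h (k+1) := by
      intro k
      induction k with
      | zero =>
        have h1 : h 1 = (μ:ℝ)⁻¹ • f x := by rw [hsucc 0, h0]
        rw [Function.iterate_one, hgdef]
        simp only []
        rw [h1, norm_smul, Real.norm_eq_abs, abs_of_pos hμinv, smul_smul]
        congr 1
        have hfx : (0:ℝ) < ‖f x‖ := norm_pos_iff.mpr (hne _ (hf_maps x hx))
        field_simp
      | succ k ih =>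
        have hki : h (k+1) ∈ interior C := hh_int (k+1)
        have hkn : (0:ℝ) < ‖h (k+1)‖ := norm_pos_iff.mpr (hne _ hki)
        have hkn2 : (0:ℝ) < ‖h (k+2)‖ := norm_pos_iff.mpr (hne _ (hh_int (k+2)))
        rw [Function.iterate_succ_apply', ih, hgdef]
        simp only []
        have hfw : f (‖h (k+1)‖⁻¹ • h (k+1)) = (‖h (k+1)‖⁻¹ * μ) • h (k+2) := by
          rw [hf_hom _ hki _ (by positivity), hfF (h (k+1)), ← hsucc (k+1), smul_smul]
        rw [hfw, norm_smul, Real.norm_eq_abs, abs_of_pos (by positivity), smul_smul]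
        congr 1
        have hkk : k + 1 + 1 = k + 2 := by omega
        rw [hkk]
        field_simp
    -- compact set containing the unnormalized orbit
    set K : Set X := ((fun p : ℝ × X => p.1 • p.2) ''
        ((Set.Icc c₁ c₂) ×ˢ closure (Set.range fun k => g^[k] x))) ∪ {x} with hKdef
    have hKcpt : IsCompact K := by
      apply IsCompact.union
      · exact IsCompact.image ((isCompact_Icc).prod horbit) continuous_smul
      · exact isCompact_singleton
    have hrangeK : ∀ k, h k ∈ K := by
      intro k
      cases k with
      | zero => exact Or.inr (by rw [h0]; rfl)
      | succ k =>
        left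
        refine ⟨(‖h (k+1)‖, g^[k+1] x), ⟨⟨(hhn (k+1)).1, (hhn (k+1)).2⟩,
          subset_closure ⟨k+1, rfl⟩⟩, ?_⟩
        have hkn : (0:ℝ) < ‖h (k+1)‖ := norm_pos_iff.mpr (hne _ (hh_int (k+1)))
        simp only [hyk k, smul_smul, mul_inv_cancel₀ hkn.ne', one_smul]
    -- the omega limit set
    set L : Set X := ⋂ N : ℕ, closure (h '' Set.Ici N) with hLdef
    have htail_sub : ∀ N : ℕ, closure (h '' Set.Ici N) ⊆ K := by
      intro N
      apply closure_minimal _ hKcpt.isClosed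
      rintro _ ⟨k, _, rfl⟩
      exact hrangeK k
    have hLclosed : IsClosed L := isClosed_iInter fun N => isClosed_closure
    have hLcpt : IsCompact L :=
      hKcpt.of_isClosed_subset hLclosed ((Set.iInter_subset _ 0).trans (htail_sub 0))
    have hLne : L.Nonempty := by
      apply IsCompact.nonempty_iInter_of_sequence_nonempty_isCompact_isClosed
      · intro N
        exact closure_mono (Set.image_mono (Set.Ici_subset_Ici.mpr (by omega)))
      · intro N
        exact ⟨h N, subset_closure ⟨N, Set.mem_Ici.mpr le_rfl, rfl⟩⟩
      · exact hKcpt.of_isClosed_subset isClosed_closure (htail_sub 0)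
      · intro N; exact isClosed_closure
    have hLmem : ∀ p ∈ L, ∀ N : ℕ, ∀ ε > 0, ∃ k ≥ N, ‖h k - p‖ < ε := by
      intro p hp N ε hε
      have hm := Set.mem_iInter.mp hp N
      rw [Metric.mem_closure_iff] at hm
      obtain ⟨b, hb, hd⟩ := hm ε hε
      obtain ⟨k, hk, rfl⟩ := hb
      exact ⟨k, hk, by rwa [dist_comm, dist_eq_norm] at hd⟩
    have hLseq : ∀ p ∈ L, ∃ m : ℕ → ℕ, (∀ n, n ≤ m n) ∧
        Tendsto (fun n => h (m n)) atTop (𝓝 p) := by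
      intro p hp
      have hsel : ∀ n : ℕ, ∃ k, k ≥ n ∧ ‖h k - p‖ < 1/(n+1) :=
        fun n => hLmem p hp n (1/(n+1)) (by positivity)
      choose m hm1 hm2 using hsel
      refine ⟨m, hm1, ?_⟩
      rw [Metric.tendsto_atTop]
      intro ε hε
      obtain ⟨N, hN⟩ := exists_nat_gt (1/ε)
      refine ⟨N, fun n hn => ?_⟩
      rw [dist_eq_norm]
      have h1 : (1:ℝ)/(n+1) < ε := by
        rw [div_lt_iff₀ (by positivity)]
        have h2 : (1:ℝ)/ε < N := hN
        have h3 : (N:ℝ) ≤ n := by exact_mod_cast hn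
        rw [div_lt_iff₀ hε] at h2
        nlinarith
      exact lt_trans (hm2 n) h1
    have hLa : ∀ p ∈ L, p - a₀ • u ∈ C := by
      intro p hp
      obtain ⟨m, _, hm2⟩ := hLseq p hp
      exact hC_closed.mem_of_tendsto (hm2.sub tendsto_const_nhds)
        (Filter.Eventually.of_forall fun n => (hh (m n)).1)
    have hLb : ∀ p ∈ L, b₀ • u - p ∈ C := by
      intro p hp
      obtain ⟨m, _, hm2⟩ := hLseq p hp
      exact hC_closed.mem_of_tendsto (tendsto_const_nhds.sub hm2)
        (Filter.Eventually.of_forall fun n => (hh (m n)).2)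
    have hLint : ∀ p ∈ L, p ∈ interior C := fun p hp => hwint _ (hLa p hp)
    have hLnorm : ∀ p ∈ L, c₁ ≤ ‖p‖ ∧ ‖p‖ ≤ c₂ := fun p hp => hnw _ (hLa p hp) (hLb p hp)
    have hLinv : ∀ p ∈ L, F p ∈ L := by
      intro p hp
      obtain ⟨m, hm1, hm2⟩ := hLseq p hp
      have hFp : Tendsto (fun n => h (m n + 1)) atTop (𝓝 (F p)) := by
        have hc : ContinuousAt F p := hF_cont p (hLint p hp)
        exact (hc.tendsto.comp hm2).congr (fun n => (hsucc (m n)).symm)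
      rw [hLdef, Set.mem_iInter]
      intro N
      apply mem_closure_of_tendsto hFp
      filter_upwards [eventually_ge_atTop N] with n hn
      exact ⟨m n + 1, by have := hm1 n; simp only [Set.mem_Ici]; omega, rfl⟩
    -- μ ≥ 1
    have hμ1 : (1:ℝ) ≤ (μ:ℝ) := by exact_mod_cast hμ
    -- the functional lam
    set lam : X → ℝ := fun w => sSup {t : ℝ | F w - t • w ∈ C} with hlamdef
    have hSw_ne : ∀ w ∈ interior C, (0:ℝ) ∈ {t : ℝ | F w - t • w ∈ C} := by
      intro w hw
      simp only [Set.mem_setOf_eq, zero_smul, sub_zero]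
      exact interior_subset (hF_int w hw)
    have hSw_bdd : ∀ w ∈ interior C, BddAbove {t : ℝ | F w - t • w ∈ C} := by
      intro w hw
      have hwn : 0 < ‖w‖ := norm_pos_iff.mpr (hne w hw)
      refine ⟨κ * ‖F w‖ / ‖w‖, fun t ht => ?_⟩
      rcases le_or_gt t 0 with hle | hgt
      · exact hle.trans (by positivity)
      · have h1 : t • w ∈ C := hC_cone w (interior_subset hw) t hgt.le
        have h2 := hnorm (t • w) (F w) h1 ht
        rw [norm_smul, Real.norm_eq_abs, abs_of_pos hgt] at h2
        rw [le_div_iff₀ hwn]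
        linarith
    have hSw_closed : ∀ w : X, IsClosed {t : ℝ | F w - t • w ∈ C} := by
      intro w
      have he : {t : ℝ | F w - t • w ∈ C} = (fun t : ℝ => F w - t • w) ⁻¹' C := rfl
      rw [he]
      exact IsClosed.preimage (continuous_const.sub (continuous_id.smul continuous_const))
        hC_closed
    have hlam_mem : ∀ w ∈ interior C, F w - lam w • w ∈ C := by
      intro w hw
      exact (hSw_closed w).csSup_mem ⟨0, hSw_ne w hw⟩ (hSw_bdd w hw)
    have hlam_ge : ∀ w ∈ interior C, ∀ t : ℝ, F w - t • w ∈ C → t ≤ lam w :=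
      fun w hw t ht => le_csSup (hSw_bdd w hw) ht
    have hlam_pos : ∀ w ∈ L, (μ:ℝ)⁻¹ ≤ lam w := by
      intro w hw
      apply hlam_ge w (hLint w hw)
      have h1 := hFstep _ ha₀u_int _ (hLint w hw) (hLa w hw)
      rw [hFa₀] at h1
      have h2 : (a₀*(1 - (μ:ℝ)⁻¹)) • u ∈ C := by
        apply hC_cone u (interior_subset hu_int)
        have hi : (μ:ℝ)⁻¹ ≤ 1 := by
          rw [inv_le_one_iff₀]; right; exact hμ1
        nlinarith
      have h3 := hCadd _ h1 _ h2
      have he : F w - a₀ • u - (μ:ℝ)⁻¹ • (w - a₀ • u) + (a₀*(1 - (μ:ℝ)⁻¹)) • u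
          = F w - (μ:ℝ)⁻¹ • w := by module
      rwa [he] at h3
    have hlam_step : ∀ w ∈ L, lam w ≤ lam (F w) := by
      intro w hw
      have hwi := hLint w hw
      have hFwi := hF_int w hwi
      have hlampos : 0 < lam w := lt_of_lt_of_le hμinv (hlam_pos w hw)
      have hlw : lam w • w ∈ interior C := aux_smul_int hC_cone hlampos hwi
      have h1 := hFmono _ hlw _ hFwi (hlam_mem w hwi)
      rw [hF_hom w hwi _ hlampos] at h1
      exact hlam_ge _ hFwi _ h1
    -- sup of lam over L, attained
    have him_ne : (lam '' L).Nonempty := hLne.image lam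
    have him_bdd : BddAbove (lam '' L) := by
      refine ⟨κ * c₂ / c₁, ?_⟩
      rintro _ ⟨w, hw, rfl⟩
      have hwi := hLint w hw
      apply csSup_le ⟨0, hSw_ne w hwi⟩
      intro t ht
      rcases le_or_gt t 0 with hle | hgt
      · exact hle.trans (by positivity)
      · have h1 : t • w ∈ C := hC_cone w (interior_subset hwi) t hgt.le
        have h2 := hnorm (t • w) (F w) h1 ht
        rw [norm_smul, Real.norm_eq_abs, abs_of_pos hgt] at h2
        have h3 : ‖F w‖ ≤ c₂ := (hLnorm _ (hLinv w hw)).2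
        have h4 : c₁ ≤ ‖w‖ := (hLnorm w hw).1
        rw [le_div_iff₀ hc₁pos]
        have h5 : t * c₁ ≤ t * ‖w‖ := mul_le_mul_of_nonneg_left h4 hgt.le
        have h6 : κ * ‖F w‖ ≤ κ * c₂ := mul_le_mul_of_nonneg_left h3 hκ.le
        linarith
    set lb : ℝ := sSup (lam '' L) with hlbdef
    obtain ⟨z₀, hz₀L, hz₀⟩ : ∃ z₀ ∈ L, lam z₀ = lb := by
      have hsel : ∀ n : ℕ, ∃ w, w ∈ L ∧ lb - 1/(n+1) < lam w := by
        intro n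
        have hlt : lb - 1/(n+1) < lb := by
          have : (0:ℝ) < 1/(n+1) := by positivity
          linarith
        obtain ⟨y, hy, hy2⟩ := exists_lt_of_lt_csSup him_ne hlt
        obtain ⟨w, hwL, rfl⟩ := hy
        exact ⟨w, hwL, hy2⟩
      choose w hwL hwlam using hsel
      obtain ⟨z₀, hz₀L, σ, hσ, hσt⟩ := hLcpt.tendsto_subseq hwL
      refine ⟨z₀, hz₀L, le_antisymm (le_csSup him_bdd ⟨z₀, hz₀L, rfl⟩) ?_⟩
      apply hlam_ge z₀ (hLint z₀ hz₀L)
      have haux : Tendsto (fun n : ℕ => 1/((n:ℝ)+1)) atTop (𝓝 0) :=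
        tendsto_one_div_add_atTop_nhds_zero_nat
      have haux2 : Tendsto (fun n : ℕ => 1/((σ n:ℝ)+1)) atTop (𝓝 0) := by
        apply squeeze_zero (fun n => by positivity) (fun n => ?_) haux
        have h2 : n ≤ σ n := hσ.le_apply
        have h1 : (n:ℝ) + 1 ≤ (σ n:ℝ) + 1 := by
          have h3 : (n:ℝ) ≤ (σ n:ℝ) := by exact_mod_cast h2
          linarith
        exact one_div_le_one_div_of_le (by positivity) h1
      have hlamt : Tendsto (fun n => lam (w (σ n))) atTop (𝓝 lb) := by
        refine tendsto_of_tendsto_of_tendsto_of_le_of_le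
          (g := fun n : ℕ => lb - 1/((σ n:ℝ)+1)) (h := fun _ : ℕ => lb) ?_ ?_ ?_ ?_
        · have hc : Tendsto (fun _ : ℕ => lb) atTop (𝓝 lb) := tendsto_const_nhds
          have h2 := hc.sub haux2
          simpa using h2
        · exact tendsto_const_nhds
        · intro n; exact (hwlam (σ n)).le
        · intro n; exact le_csSup him_bdd ⟨w (σ n), hwL (σ n), rfl⟩
      have hFt : Tendsto (fun n => F (w (σ n))) atTop (𝓝 (F z₀)) :=
        (hF_cont z₀ (hLint z₀ hz₀L)).tendsto.comp hσt
      have hmain := hFt.sub (hlamt.smul hσt)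
      exact hC_closed.mem_of_tendsto hmain
        (Filter.Eventually.of_forall fun n => hlam_mem _ (hLint _ (hwL (σ n))))
    have hlbpos : 0 < lb := lt_of_lt_of_le hμinv (hz₀ ▸ hlam_pos z₀ hz₀L)
    -- the orbit of z₀
    set z : ℕ → X := fun j => F^[j] z₀ with hzdef
    have hz0 : z 0 = z₀ := rfl
    have hzsucc : ∀ j, z (j+1) = F (z j) := fun j => Function.iterate_succ_apply' F j z₀
    have hzL : ∀ j, z j ∈ L := by
      intro j
      induction j with
      | zero => exact hz₀L
      | succ j ih => rw [hzsucc]; exact hLinv _ ih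
    have hzint : ∀ j, z j ∈ interior C := fun j => hLint _ (hzL j)
    have hzlam : ∀ j, lam (z j) = lb := by
      intro j
      induction j with
      | zero => exact hz₀
      | succ j ih =>
        refine le_antisymm (le_csSup him_bdd ⟨z (j+1), hzL _, rfl⟩) ?_
        calc lb = lam (z j) := ih.symm
          _ ≤ lam (F (z j)) := hlam_step _ (hzL j)
          _ = lam (z (j+1)) := by rw [hzsucc]
    -- defects P j = z (j+1) - lb • z j
    have hPC : ∀ j, z (j+1) - lb • z j ∈ C := by
      intro j
      have h1 := hlam_mem (z j) (hzint j)
      rw [hzlam j, ← hzsucc] at h1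
      exact h1
    have hPprop : ∀ j, (z (j+1+1) - lb • z (j+1)) - (μ:ℝ)⁻¹ • (z (j+1) - lb • z j) ∈ C := by
      intro j
      have hlbz : lb • z j ∈ interior C := aux_smul_int hC_cone hlbpos (hzint j)
      have h1 := hFstep _ hlbz _ (hzint (j+1)) (hPC j)
      rw [hF_hom _ (hzint j) _ hlbpos, ← hzsucc, ← hzsucc] at h1
      exact h1
    have hPbd : ∀ j, z (j+1) - lb • z j ∉ interior C := by
      intro j hmem
      obtain ⟨ρ, hρ, hball⟩ := Metric.isOpen_iff.mp isOpen_interior _ hmem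
      have hzn : (0:ℝ) < ‖z j‖ := norm_pos_iff.mpr (hne _ (hzint j))
      have h1 : z (j+1) - lb • z j - (ρ/(2*‖z j‖)) • z j ∈ C := by
        apply interior_subset
        apply hball
        rw [Metric.mem_ball, dist_eq_norm]
        have he : z (j+1) - lb • z j - (ρ/(2*‖z j‖)) • z j - (z (j+1) - lb • z j)
            = -((ρ/(2*‖z j‖)) • z j) := by abel
        rw [he, norm_neg, norm_smul, Real.norm_eq_abs, abs_of_pos (by positivity)]
        have h2 : ρ/(2*‖z j‖) * ‖z j‖ = ρ/2 := by field_simp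
        rw [h2]
        linarith
      have h2 : z (j+1) - (lb + ρ/(2*‖z j‖)) • z j ∈ C := by
        have he : z (j+1) - (lb + ρ/(2*‖z j‖)) • z j
            = z (j+1) - lb • z j - (ρ/(2*‖z j‖)) • z j := by module
        rw [he]; exact h1
      have h3 : lb + ρ/(2*‖z j‖) ≤ lam (z j) := by
        apply hlam_ge _ (hzint j)
        rw [hzsucc] at h2
        exact h2
      rw [hzlam j] at h3
      have : (0:ℝ) < ρ/(2*‖z j‖) := by positivity
      linarith
    -- the pinching lemma
    have pinch : ∀ t : ℝ, 0 < t → ∀ d e : ℝ, 0 < d →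
        (∀ m : ℕ, d ≤ t^(m+1) ∧ t^(m+1) ≤ e) → t = 1 := by
      intro t ht d e hd hbnd
      by_contra hne1
      rcases lt_or_gt_of_ne hne1 with hlt | hgt
      · have h0 := tendsto_pow_atTop_nhds_zero_of_lt_one ht.le hlt
        have hev : ∀ᶠ m : ℕ in atTop, t^m < d := h0.eventually (gt_mem_nhds hd)
        obtain ⟨m, hm1, hm2⟩ := (hev.and (eventually_ge_atTop 1)).exists
        have h2 := (hbnd (m-1)).1
        rw [show m - 1 + 1 = m by omega] at h2
        linarith
      · have h0 := tendsto_pow_atTop_atTop_of_one_lt hgt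
        have hev : ∀ᶠ m : ℕ in atTop, e < t^m := h0.eventually_gt_atTop e
        obtain ⟨m, hm1, hm2⟩ := (hev.and (eventually_ge_atTop 1)).exists
        have h2 := (hbnd (m-1)).2
        rw [show m - 1 + 1 = m by omega] at h2
        linarith
    -- a fixed point of F inside L
    obtain ⟨v, hvL, hvF⟩ : ∃ v ∈ L, F v = v := by
      by_cases hPz : ∃ j, z (j+1) - lb • z j = 0
      · -- case (a): some defect vanishes
        obtain ⟨j₀, hj₀⟩ := hPz
        have hz1 : z (j₀+1) = lb • z j₀ := by rwa [sub_eq_zero] at hj₀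
        have hit : ∀ m : ℕ, z (j₀+m) = lb^m • z j₀ := by
          intro m
          induction m with
          | zero => simp
          | succ m ih =>
            have he : j₀ + (m+1) = (j₀ + m) + 1 := rfl
            rw [he, hzsucc, ih, hF_hom _ (hzint j₀) _ (pow_pos hlbpos m), ← hzsucc,
              hz1, smul_smul, ← pow_succ]
        have hzjn : (0:ℝ) < ‖z j₀‖ := norm_pos_iff.mpr (hne _ (hzint j₀))
        have hbnd : ∀ m : ℕ, c₁/c₂ ≤ lb^(m+1) ∧ lb^(m+1) ≤ c₂/c₁ := by
          intro m
          have h1 := hLnorm _ (hzL (j₀+(m+1)))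
          rw [hit (m+1), norm_smul, Real.norm_eq_abs, abs_of_pos (pow_pos hlbpos (m+1))] at h1
          have h2 := hLnorm _ (hzL j₀)
          have hc₂pos : (0:ℝ) < c₂ := lt_of_lt_of_le hc₁pos (le_trans h2.1 h2.2)
          constructor
          · rw [div_le_iff₀ hc₂pos]
            calc c₁ ≤ lb^(m+1) * ‖z j₀‖ := h1.1
              _ ≤ lb^(m+1) * c₂ := by
                  apply mul_le_mul_of_nonneg_left h2.2 (pow_pos hlbpos (m+1)).le
          · rw [le_div_iff₀ hc₁pos]
            calc lb^(m+1) * c₁ ≤ lb^(m+1) * ‖z j₀‖ := by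
                  apply mul_le_mul_of_nonneg_left h2.1 (pow_pos hlbpos (m+1)).le
              _ ≤ c₂ := h1.2
        have hlb1 : lb = 1 := pinch lb hlbpos (c₁/c₂) (c₂/c₁)
          (by positivity : (0:ℝ) < c₁/c₂) hbnd
        refine ⟨z j₀, hzL j₀, ?_⟩
        rw [← hzsucc, hz1, hlb1, one_smul]
      · -- case (b): no defect vanishes; use supporting functionals
        push_neg at hPz
        have hbnd : ∀ j : ℕ, a₀/b₀ ≤ lb^(j+1) ∧ lb^(j+1) ≤ b₀/a₀ := by
          intro j
          obtain ⟨φ, hφ⟩ := geometric_hahn_banach_point_open hC_convex.interior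
            isOpen_interior (hPbd j)
          -- φ is nonnegative on the interior of C
          have hφint : ∀ w ∈ interior C, 0 ≤ φ w := by
            intro w hw
            by_contra hneg
            push_neg at hneg
            set t : ℝ := max 1 ((φ (z (j+1) - lb • z j) - 1)/ φ w) with htdef
            have ht : 0 < t := lt_of_lt_of_le one_pos (le_max_left _ _)
            have hmem := aux_smul_int hC_cone ht hw
            have h1 := hφ _ hmem
            rw [map_smul, smul_eq_mul] at h1
            have h2 : t * φ w ≤ ((φ (z (j+1) - lb • z j) - 1)/φ w) * φ w :=
              mul_le_mul_of_nonpos_right (le_max_right _ _) hneg.le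
            rw [div_mul_cancel₀ _ hneg.ne] at h2
            linarith
          -- φ is nonnegative on C
          have hφC : ∀ w ∈ C, 0 ≤ φ w := by
            intro w hw
            have hseq : ∀ n : ℕ, 0 ≤ φ ((1/((n:ℝ)+1)) • u + (1 - 1/((n:ℝ)+1)) • w) := by
              intro n
              apply hφint
              have hs : (0:ℝ) < 1/((n:ℝ)+1) := by positivity
              have hs1 : 1/((n:ℝ)+1) ≤ 1 := by
                rw [div_le_one (by positivity)]
                have : (0:ℝ) ≤ (n:ℝ) := Nat.cast_nonneg n
                linarith
              have h1 : (1/((n:ℝ)+1)) • u ∈ interior C := aux_smul_int hC_cone hs hu_int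
              have h2 : (1 - 1/((n:ℝ)+1)) • w ∈ C := hC_cone w hw _ (by linarith)
              exact aux_int_add hC_convex hC_cone h1 h2
            have hten : Tendsto (fun n : ℕ => (1/((n:ℝ)+1)) • u + (1 - 1/((n:ℝ)+1)) • w)
                atTop (𝓝 w) := by
              have h1 : Tendsto (fun n : ℕ => (1/((n:ℝ)+1)) • u) atTop (𝓝 ((0:ℝ) • u)) :=
                tendsto_one_div_add_atTop_nhds_zero_nat.smul_const u
              have h2 : Tendsto (fun n : ℕ => (1 - 1/((n:ℝ)+1)) • w) atTop
                  (𝓝 (((1:ℝ) - 0) • w)) :=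
                (tendsto_const_nhds.sub tendsto_one_div_add_atTop_nhds_zero_nat).smul_const w
              have h3 := h1.add h2
              simpa using h3
            have hlim : Tendsto (fun n : ℕ => φ ((1/((n:ℝ)+1)) • u + (1 - 1/((n:ℝ)+1)) • w))
                atTop (𝓝 (φ w)) := (φ.continuous.tendsto w).comp hten
            exact ge_of_tendsto hlim (Filter.Eventually.of_forall hseq)
          -- φ vanishes on the defect
          have hφP0 : φ (z (j+1) - lb • z j) = 0 := by
            refine le_antisymm ?_ (hφC _ (hPC j))
            have hseq : ∀ n : ℕ, φ (z (j+1) - lb • z j) < (1/((n:ℝ)+1)) * φ u := by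
              intro n
              have h1 := hφ _ (aux_smul_int hC_cone
                (by positivity : (0:ℝ) < 1/((n:ℝ)+1)) hu_int)
              rwa [map_smul, smul_eq_mul] at h1
            have hlim : Tendsto (fun n : ℕ => (1/((n:ℝ)+1)) * φ u) atTop (𝓝 0) := by
              have := tendsto_one_div_add_atTop_nhds_zero_nat.mul_const (φ u)
              simpa using this
            exact ge_of_tendsto hlim (Filter.Eventually.of_forall fun n => (hseq n).le)
          have hφu : 0 < φ u := by
            have h1 := hφ u hu_int
            rw [hφP0] at h1
            exact h1
          -- bounds of φ on L
          have hφlow : ∀ w ∈ L, a₀ * φ u ≤ φ w := by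
            intro w hw
            have h1 := hφC _ (hLa w hw)
            rw [map_sub, map_smul, smul_eq_mul] at h1
            linarith
          have hφhigh : ∀ w ∈ L, φ w ≤ b₀ * φ u := by
            intro w hw
            have h1 := hφC _ (hLb w hw)
            rw [map_sub, map_smul, smul_eq_mul] at h1
            linarith
          -- downward propagation of zeros
          have hdown : ∀ m, φ (z (m+1+1) - lb • z (m+1)) = 0 →
              φ (z (m+1) - lb • z m) = 0 := by
            intro m hm
            have h1 := hφC _ (hPprop m)
            rw [map_sub, map_smul, smul_eq_mul, hm] at h1
            have h2 := hφC _ (hPC m)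
            nlinarith
          have hzero : ∀ i, i ≤ j → φ (z (j - i + 1) - lb • z (j - i)) = 0 := by
            intro i
            induction i with
            | zero => intro _; simpa using hφP0
            | succ i ih =>
              intro hij
              have h1 : j - i = (j - (i+1)) + 1 := by omega
              have h2 := ih (by omega)
              rw [h1] at h2
              exact hdown _ h2
          have hzero' : ∀ m, m ≤ j → φ (z (m+1) - lb • z m) = 0 := by
            intro m hm
            have h1 := hzero (j - m) (by omega)
            rwa [show j - (j - m) = m by omega] at h1
          -- telescoping
          have htel : ∀ i, i ≤ j + 1 → φ (z i) = lb^i * φ (z 0) := by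
            intro i
            induction i with
            | zero => intro _; simp
            | succ i ih =>
              intro hij
              have h1 := hzero' i (by omega)
              rw [map_sub, map_smul, smul_eq_mul] at h1
              have h2 := ih (by omega)
              have h3 : φ (z (i+1)) = lb * φ (z i) := by linarith
              rw [h3, h2, pow_succ]; ring
          have hb1 := htel (j+1) le_rfl
          have hl0 := hφlow _ (hzL 0)
          have hh0 := hφhigh _ (hzL 0)
          have hl1 := hφlow _ (hzL (j+1))
          have hh1 := hφhigh _ (hzL (j+1))
          rw [hb1] at hl1 hh1
          have hlbp := pow_pos hlbpos (j+1)
          constructor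
          · rw [div_le_iff₀ hb₀pos]
            have h4 : lb^(j+1) * φ (z 0) ≤ lb^(j+1) * (b₀ * φ u) :=
              mul_le_mul_of_nonneg_left hh0 hlbp.le
            have h5 : a₀ * φ u ≤ lb^(j+1) * (b₀ * φ u) := le_trans hl1 h4
            have h6 : a₀ * φ u ≤ (lb^(j+1) * b₀) * φ u := by
              rw [mul_assoc]; exact h5
            exact le_of_mul_le_mul_right h6 hφu
          · rw [le_div_iff₀ ha₀pos]
            have h4 : lb^(j+1) * (a₀ * φ u) ≤ lb^(j+1) * φ (z 0) :=
              mul_le_mul_of_nonneg_left hl0 hlbp.le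
            have h5 : lb^(j+1) * (a₀ * φ u) ≤ b₀ * φ u := le_trans h4 hh1
            have h6 : (lb^(j+1) * a₀) * φ u ≤ b₀ * φ u := by
              rw [mul_assoc]; exact h5
            exact le_of_mul_le_mul_right h6 hφu
        have hlb1 : lb = 1 := pinch lb hlbpos (a₀/b₀) (b₀/a₀) (by positivity) hbnd
        -- the orbit z is monotone increasing, hence converges in the compact L
        have hmonz : ∀ j, z (j+1) - z j ∈ C := by
          intro j
          have := hPC j
          rwa [hlb1, one_smul] at this
        have hchain : ∀ i k : ℕ, i ≤ k → z k - z i ∈ C := by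
          intro i k hik
          induction k with
          | zero =>
            have : i = 0 := by omega
            subst this
            simpa using hC_cone u (interior_subset hu_int) 0 le_rfl
          | succ k ih =>
            rcases Nat.lt_or_ge i (k+1) with hlt | hge
            · have h1 := ih (by omega)
              have h2 := hCadd _ (hmonz k) _ h1
              have he : z (k+1) - z k + (z k - z i) = z (k+1) - z i := by abel
              rwa [he] at h2
            · have : i = k+1 := by omega
              subst this
              simpa using hC_cone u (interior_subset hu_int) 0 le_rfl
        obtain ⟨v, hvL, σ, hσ, hσt⟩ := hLcpt.tendsto_subseq hzL
        have hvz : ∀ i, v - z i ∈ C := by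
          intro i
          apply hC_closed.mem_of_tendsto (hσt.sub (tendsto_const_nhds (x := z i)))
          filter_upwards [eventually_ge_atTop i] with n hn
          exact hchain i (σ n) (le_trans hn (hσ.le_apply))
        have hzt : Tendsto z atTop (𝓝 v) := by
          rw [Metric.tendsto_atTop]
          intro ε hε
          have hε' : (0:ℝ) < ε/(κ+1) := by positivity
          obtain ⟨n₀, hn₀⟩ := (Metric.tendsto_atTop.mp hσt (ε/(κ+1)) hε') 
          refine ⟨σ n₀, fun k hk => ?_⟩
          have hd : dist (z (σ n₀)) v < ε/(κ+1) := by
            have := hn₀ n₀ le_rfl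
            simpa using this
          have h1 : z k - z (σ n₀) ∈ C := hchain _ _ hk
          have h2 : (v - z (σ n₀)) - (z k - z (σ n₀)) ∈ C := by
            have he : (v - z (σ n₀)) - (z k - z (σ n₀)) = v - z k := by abel
            rw [he]; exact hvz k
          have h3 := hnorm _ _ h1 h2
          rw [dist_eq_norm] at hd ⊢
          have h4 : ‖v - z (σ n₀)‖ < ε/(κ+1) := by
            rw [norm_sub_rev] at hd; exact hd
          have h5 : ‖z k - z (σ n₀)‖ ≤ κ * (ε/(κ+1)) :=
            le_trans h3 (mul_le_mul_of_nonneg_left h4.le hκ.le)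
          calc ‖z k - v‖ ≤ ‖z k - z (σ n₀)‖ + ‖z (σ n₀) - v‖ := by
                have he : z k - v = (z k - z (σ n₀)) + (z (σ n₀) - v) := by abel
                rw [he]; exact norm_add_le _ _
            _ < κ * (ε/(κ+1)) + ε/(κ+1) := by
                apply add_lt_add_of_le_of_lt h5
                rw [norm_sub_rev] at h4; exact h4
            _ = ε := by field_simp
        refine ⟨v, hvL, ?_⟩
        have h1 : Tendsto (fun j => z (j+1)) atTop (𝓝 v) := by
          rw [show (fun j : ℕ => z (j+1)) = z ∘ (fun j => j + 1) from rfl]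
          exact hzt.comp (tendsto_add_atTop_nat 1)
        have h2 : Tendsto (fun j => F (z j)) atTop (𝓝 (F v)) :=
          (hF_cont v (hLint v hvL)).tendsto.comp hzt
        have h3 : Tendsto (fun j => z (j+1)) atTop (𝓝 (F v)) :=
          h2.congr fun j => (hzsucc j).symm
        exact tendsto_nhds_unique h3 h1
    -- FINAL PHASE: the whole unnormalized orbit converges to v
    have hvint : v ∈ interior C := hLint v hvL
    have hv0 : v ≠ 0 := hne v hvint
    have hvn : (0:ℝ) < ‖v‖ := norm_pos_iff.mpr hv0
    have hfv : f v = (μ:ℝ) • v := by rw [hfF v, hvF]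
    obtain ⟨δv, hδv, hballv⟩ := Metric.isOpen_iff.mp isOpen_interior v hvint
    have hballv' : Metric.ball v δv ⊆ C := hballv.trans interior_subset
    set cv : ℝ := 2/δv with hcv
    have hcvpos : 0 < cv := by positivity
    have htransport : ∀ (t : ℝ), 0 < t → t < 1 → ∀ k₀,
        (h k₀ - (1-t) • v ∈ C ∧ (1+t) • v - h k₀ ∈ C) →
        ∀ k, k₀ ≤ k → (h k - (1-t) • v ∈ C ∧ (1+t) • v - h k ∈ C) := by
      intro t ht ht1 k₀ hbase k
      induction k with
      | zero =>
        intro hk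
        have hk0 : k₀ = 0 := by omega
        rw [hk0] at hbase
        exact hbase
      | succ k ih =>
        intro hk
        rcases Nat.lt_or_ge k₀ (k+1) with hlt | hge
        · have hkk := ih (by omega)
          have h1t : (0:ℝ) < 1 - t := by linarith
          have h1t' : (0:ℝ) < 1 + t := by linarith
          have hv1 : (1-t) • v ∈ interior C := aux_smul_int hC_cone h1t hvint
          have hv2 : (1+t) • v ∈ interior C := aux_smul_int hC_cone h1t' hvint
          constructor
          · have hstep := hFmono _ hv1 _ (hh_int k) hkk.1
            rw [hF_hom v hvint _ h1t, hvF, ← hsucc] at hstep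
            exact hstep
          · have hstep := hFmono _ (hh_int k) _ hv2 hkk.2
            rw [hF_hom v hvint _ h1t', hvF, ← hsucc] at hstep
            exact hstep
        · have hk1 : k₀ = k+1 := by omega
          rw [hk1] at hbase
          exact hbase
    have hht : Tendsto h atTop (𝓝 v) := by
      rw [Metric.tendsto_atTop]
      intro ε hε
      set t : ℝ := min (1/2) (ε / ((2*κ+2)*‖v‖)) with htdef
      have ht0 : 0 < t := lt_min (by norm_num) (by positivity)
      have ht1 : t < 1 := lt_of_le_of_lt (min_le_left _ _) (by norm_num)
      obtain ⟨k₀, hk₀ge, hk₀⟩ := hLmem v hvL 0 (t/cv) (by positivity)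
      have hξb : cv * ‖h k₀ - v‖ < t := by
        have h9 := (lt_div_iff₀ hcvpos).mp hk₀
        nlinarith [h9]
      have hbase : h k₀ - (1-t) • v ∈ C ∧ (1+t) • v - h k₀ ∈ C := by
        constructor
        · have hb := aux_ball hC_cone hδv hballv' (h k₀ - v)
          rw [← hcv] at hb
          have hrest : (t - cv*‖h k₀ - v‖) • v ∈ C :=
            hC_cone v (interior_subset hvint) _ (by linarith)
          have hs := hCadd _ hb _ hrest
          have he : (cv*‖h k₀ - v‖) • v + (h k₀ - v) + (t - cv*‖h k₀ - v‖) • v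
              = h k₀ - (1-t) • v := by module
          rwa [he] at hs
        · have hb := aux_ball hC_cone hδv hballv' (-(h k₀ - v))
          rw [norm_neg, ← hcv] at hb
          have hrest : (t - cv*‖h k₀ - v‖) • v ∈ C :=
            hC_cone v (interior_subset hvint) _ (by linarith)
          have hs := hCadd _ hb _ hrest
          have he : (cv*‖h k₀ - v‖) • v + -(h k₀ - v) + (t - cv*‖h k₀ - v‖) • v
              = (1+t) • v - h k₀ := by module
          rwa [he] at hs
      refine ⟨k₀, fun k hk => ?_⟩
      obtain ⟨hsand1, hsand2⟩ := htransport t ht0 ht1 k₀ hbase k hk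
      have h2 : (2*t) • v - (h k - (1-t) • v) ∈ C := by
        have he : (2*t) • v - (h k - (1-t) • v) = (1+t) • v - h k := by module
        rw [he]; exact hsand2
      have h3 := hnorm _ _ hsand1 h2
      rw [norm_smul, Real.norm_eq_abs, abs_of_pos (by positivity : (0:ℝ) < 2*t)] at h3
      have htri : ‖h k - v‖ ≤ ‖h k - (1-t) • v‖ + t * ‖v‖ := by
        have he : h k - v = (h k - (1-t) • v) + (-(t • v)) := by module
        calc ‖h k - v‖ = ‖(h k - (1-t) • v) + (-(t • v))‖ := by rw [← he]
          _ ≤ ‖h k - (1-t) • v‖ + ‖-(t • v)‖ := norm_add_le _ _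
          _ = ‖h k - (1-t) • v‖ + t * ‖v‖ := by
              rw [norm_neg, norm_smul, Real.norm_eq_abs, abs_of_pos ht0]
      have ht' : t ≤ ε / ((2*κ+2)*‖v‖) := min_le_right _ _
      have ht'' : t * ((2*κ+2)*‖v‖) ≤ ε := by
        rw [← le_div_iff₀ (by positivity)]
        exact ht'
      have hp : 0 < t * ‖v‖ := by positivity
      rw [dist_eq_norm]
      nlinarith [h3, htri]
    -- assemble the conclusion
    refine ⟨‖v‖⁻¹ • v, aux_smul_int hC_cone (by positivity) hvint, ⟨μ, hμ, ?_⟩, ?_⟩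
    · rw [hf_hom v hvint _ (by positivity : (0:ℝ) < ‖v‖⁻¹), hfv,
        ← Nat.cast_smul_eq_nsmul ℝ μ (‖v‖⁻¹ • v), smul_comm]
    · have hnt : Tendsto (fun k => ‖h k‖⁻¹ • h k) atTop (𝓝 (‖v‖⁻¹ • v)) :=
        ((hht.norm).inv₀ hvn.ne').smul hht
      apply Tendsto.congr' _ hnt
      filter_upwards [eventually_ge_atTop 1] with k hk
      obtain ⟨k', rfl⟩ : ∃ k', k = k'+1 := ⟨k-1, by omega⟩
      exact (hyk k').symm
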